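/- If X ~ BGamma(α,β,δ) (with β, δ fixed, 0 < δ < 2β), then the score has zero mean: E[(d/dα) log f(X;α,β,δ)] = 0, i.e., E[log X] = Z'(α)/Z(α) − log β + ψ(α), where Z(α) = 2 + (αδ/β)[(1+α)δ/β − 2] and Z'(α) = (δ/β)[(1+2α)δ/β − 2]. -/

import Mathlib

open MeasureTheory Real Set

noncomputable def Zc (α β δ : ℝ) : ℝ := 2 + (α * δ / β) * ((1 + α) * δ / β - 2)

noncomputable def bgammaPDF (α β δ x : ℝ) : ℝ :=
  (1 + (1 - δ * x) ^ 2) / Zc α β δ * (β ^ α / Real.Gamma α) * x ^ (α - 1) * Real.exp (-β * x)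

noncomputable def gammaPDF (α β x : ℝ) : ℝ :=
  β ^ α / Real.Gamma α * x ^ (α - 1) * Real.exp (-β * x)

open Filter Asymptotics
open scoped Topology


noncomputable def Jr (s : ℝ) : ℝ := ∫ t in Ioi 0, t ^ (s - 1) * (Real.log t * Real.exp (-t))

lemma mellinConv_log_exp {s : ℂ} (hs : 0 < s.re) :
    MellinConvergent (fun t => Real.log t • ((Real.exp (-t) : ℝ) : ℂ)) s := by
  refine (mellin_hasDerivAt_of_isBigO_rpow (E := ℂ) ?_ ?_ (lt_add_one _) ?_ hs).1
  · refine (Continuous.continuousOn ?_).locallyIntegrableOn measurableSet_Ioi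
    exact Complex.continuous_ofReal.comp (Real.continuous_exp.comp continuous_neg)
  · rw [← isBigO_norm_left]
    simp_rw [Complex.norm_real, isBigO_norm_left]
    simpa only [neg_one_mul] using (isLittleO_exp_neg_mul_rpow_atTop zero_lt_one _).isBigO
  · simp_rw [neg_zero, Real.rpow_zero]
    refine isBigO_const_of_tendsto (?_ : Tendsto _ _ (𝓝 (1 : ℂ))) one_ne_zero
    rw [(by simp : (1 : ℂ) = Real.exp (-0))]
    exact (Complex.continuous_ofReal.comp
      (Real.continuous_exp.comp continuous_neg)).continuousWithinAt

lemma integrableOn_Jr {s : ℝ} (hs : 0 < s) :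
    IntegrableOn (fun t => t ^ (s - 1) * (Real.log t * Real.exp (-t))) (Ioi 0) := by
  have h := mellinConv_log_exp (s := (s : ℂ)) (by simpa using hs)
  have h' := h.re
  refine h'.congr ?_
  filter_upwards [ae_restrict_mem measurableSet_Ioi] with t ht
  have : ((t : ℂ) ^ ((s : ℂ) - 1)) • (Real.log t • ((Real.exp (-t) : ℝ) : ℂ))
      = (((t ^ (s - 1) * (Real.log t * Real.exp (-t)) : ℝ)) : ℂ) := by
    rw [smul_eq_mul, Complex.real_smul]
    rw [show ((s : ℂ) - 1) = ((s - 1 : ℝ) : ℂ) by push_cast; ring,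
      ← Complex.ofReal_cpow (le_of_lt ht)]
    push_cast
    ring
  show ((t : ℂ) ^ ((s : ℂ) - 1) • (Real.log t • ((Real.exp (-t) : ℝ) : ℂ))).re = _
  rw [this, Complex.ofReal_re]

lemma complexInt_eq {s : ℝ} (hs : 0 < s) :
    (∫ t : ℝ in Ioi 0, (t : ℂ) ^ ((s : ℂ) - 1) * (Real.log t * Real.exp (-t))) = ((Jr s : ℝ) : ℂ) := by
  have key : (∫ t : ℝ in Ioi 0, (((t ^ (s - 1) * (Real.log t * Real.exp (-t))) : ℝ) : ℂ))
      = ((Jr s : ℝ) : ℂ) := by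
    rw [Jr]; exact integral_ofReal
  rw [← key]
  refine setIntegral_congr_fun measurableSet_Ioi fun t ht => ?_
  rw [show ((s : ℂ) - 1) = ((s - 1 : ℝ) : ℂ) by push_cast; ring,
    ← Complex.ofReal_cpow (le_of_lt ht)]
  push_cast
  ring

lemma hasDerivAt_Gamma_Jr {s : ℝ} (hs : 0 < s) : HasDerivAt Real.Gamma (Jr s) s := by
  have h0 : 0 < (s : ℂ).re := by simpa using hs
  have h1 := Complex.hasDerivAt_GammaIntegral h0
  have hev : Complex.Gamma =ᶠ[𝓝 (s : ℂ)] Complex.GammaIntegral := by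
    filter_upwards [(Complex.continuous_re.isOpen_preimage _ isOpen_Ioi).mem_nhds h0] with z hz
    exact Complex.Gamma_eq_integral hz
  have h2 : HasDerivAt Complex.Gamma
      (∫ t : ℝ in Ioi 0, (t : ℂ) ^ ((s : ℂ) - 1) * (Real.log t * Real.exp (-t))) (s : ℂ) :=
    h1.congr_of_eventuallyEq hev
  rw [complexInt_eq hs] at h2
  have h3 := h2.real_of_complex
  simpa [Complex.Gamma_ofReal] using h3


lemma integrable_x {s β : ℝ} (hs : 0 < s) (hβ : 0 < β) :
    IntegrableOn (fun x => x ^ (s - 1) * Real.exp (-(β * x))) (Ioi 0) := by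
  have h0 : IntegrableOn (fun t => Real.exp (-t) * t ^ (s - 1)) (Ioi (β * 0)) := by
    rw [mul_zero]; exact Real.GammaIntegral_convergent hs
  have h2 := (integrableOn_Ioi_comp_mul_left_iff
    (fun t => Real.exp (-t) * t ^ (s - 1)) 0 hβ).2 h0
  have h3 := h2.const_mul ((β : ℝ) ^ (-(s - 1)))
  refine h3.congr ?_
  filter_upwards [ae_restrict_mem measurableSet_Ioi] with x hx
  have hx0 : (0:ℝ) < x := hx
  have hb : (0:ℝ) < β ^ (s - 1) := Real.rpow_pos_of_pos hβ _
  rw [Real.mul_rpow hβ.le hx0.le, Real.rpow_neg hβ.le]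
  field_simp

lemma integrable_xlog {s β : ℝ} (hs : 0 < s) (hβ : 0 < β) :
    IntegrableOn (fun x => x ^ (s - 1) * (Real.log x * Real.exp (-(β * x)))) (Ioi 0) := by
  have h0 : IntegrableOn (fun t => t ^ (s - 1) * (Real.log t * Real.exp (-t))) (Ioi (β * 0)) := by
    rw [mul_zero]; exact integrableOn_Jr hs
  have h1 := (integrableOn_Ioi_comp_mul_left_iff
    (fun t => t ^ (s - 1) * (Real.log t * Real.exp (-t))) 0 hβ).2 h0
  have h2 := (integrable_x hs hβ).const_mul (Real.log β)
  refine ((h1.const_mul ((β : ℝ) ^ (-(s - 1)))).sub h2).congr ?_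
  filter_upwards [ae_restrict_mem measurableSet_Ioi] with x hx
  have hx0 : (0:ℝ) < x := hx
  have hb : (0:ℝ) < β ^ (s - 1) := Real.rpow_pos_of_pos hβ _
  simp only [Pi.sub_apply]
  rw [Real.mul_rpow hβ.le hx0.le, Real.rpow_neg hβ.le,
    Real.log_mul hβ.ne' hx0.ne']
  field_simp
  ring

lemma G_val {s β : ℝ} (hs : 0 < s) (hβ : 0 < β) :
    ∫ x in Ioi 0, x ^ (s - 1) * Real.exp (-(β * x)) = β ^ (-s) * Real.Gamma s := by
  have h := integral_comp_mul_left_Ioi (fun t => t ^ (s - 1) * Real.exp (-t)) 0 hβ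
  rw [mul_zero] at h
  have hl : (∫ x in Ioi 0, (β * x) ^ (s - 1) * Real.exp (-(β * x)))
      = β ^ (s - 1) * ∫ x in Ioi 0, x ^ (s - 1) * Real.exp (-(β * x)) := by
    rw [← integral_const_mul]
    refine setIntegral_congr_fun measurableSet_Ioi fun x hx => ?_
    rw [Real.mul_rpow hβ.le (le_of_lt hx)]; ring
  have hr : (∫ t in Ioi 0, t ^ (s - 1) * Real.exp (-t)) = Real.Gamma s := by
    rw [Real.Gamma_eq_integral hs]
    exact setIntegral_congr_fun measurableSet_Ioi fun t ht => by ring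
  rw [hl, hr, smul_eq_mul] at h
  have hb : (0:ℝ) < β ^ (s - 1) := Real.rpow_pos_of_pos hβ _
  have hkey : β ^ (s - 1) * β ^ (-s) = β⁻¹ := by
    rw [← Real.rpow_neg_one β, ← Real.rpow_add hβ]; ring_nf
  apply mul_left_cancel₀ hb.ne'
  linear_combination h - Real.Gamma s * hkey

lemma K_val {s β : ℝ} (hs : 0 < s) (hβ : 0 < β) :
    ∫ x in Ioi 0, x ^ (s - 1) * (Real.log x * Real.exp (-(β * x)))
      = β ^ (-s) * (Jr s - Real.log β * Real.Gamma s) := by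
  have h := integral_comp_mul_left_Ioi (fun t => t ^ (s - 1) * (Real.log t * Real.exp (-t))) 0 hβ
  rw [mul_zero] at h
  have hl : (∫ x in Ioi 0, (β * x) ^ (s - 1) * (Real.log (β * x) * Real.exp (-(β * x))))
      = β ^ (s - 1) * Real.log β * (∫ x in Ioi 0, x ^ (s - 1) * Real.exp (-(β * x)))
        + β ^ (s - 1) * ∫ x in Ioi 0, x ^ (s - 1) * (Real.log x * Real.exp (-(β * x))) := by
    rw [← integral_const_mul, ← integral_const_mul,
      ← integral_add (((integrable_x hs hβ).const_mul _))
        ((integrable_xlog hs hβ).const_mul _)]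
    refine setIntegral_congr_fun measurableSet_Ioi fun x hx => ?_
    rw [Real.mul_rpow hβ.le (le_of_lt hx), Real.log_mul hβ.ne' (ne_of_gt hx)]
    ring
  rw [hl, smul_eq_mul, ← Jr, G_val hs hβ] at h
  have hb : (0:ℝ) < β ^ (s - 1) := Real.rpow_pos_of_pos hβ _
  have hbs : (0:ℝ) < β ^ (-s) := Real.rpow_pos_of_pos hβ _
  have hkey : β ^ (s - 1) * β ^ (-s) = β⁻¹ := by
    rw [← Real.rpow_neg_one β, ← Real.rpow_add hβ]; ring_nf
  apply mul_left_cancel₀ hb.ne'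
  linear_combination h - Jr s * hkey



lemma I_int {s β : ℝ} (hs : 0 < s) (hβ : 0 < β) :
    IntegrableOn (fun x => Real.log x * gammaPDF s β x) (Ioi 0) := by
  have h := (integrable_xlog hs hβ).const_mul (β ^ s / Real.Gamma s)
  refine h.congr ?_
  filter_upwards [] with x
  simp only [gammaPDF, neg_mul]
  ring

lemma I_val {s β : ℝ} (hs : 0 < s) (hβ : 0 < β) :
    ∫ x in Ioi 0, Real.log x * gammaPDF s β x = Jr s / Real.Gamma s - Real.log β := by
  have hG : (0:ℝ) < Real.Gamma s := Real.Gamma_pos_of_pos hs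
  have hbs : (0:ℝ) < β ^ s := Real.rpow_pos_of_pos hβ _
  have hkey : β ^ s * β ^ (-s) = 1 := by
    rw [← Real.rpow_add hβ]; simp
  have h1 : (∫ x in Ioi 0, Real.log x * gammaPDF s β x)
      = (β ^ s / Real.Gamma s) * ∫ x in Ioi 0, x ^ (s - 1) * (Real.log x * Real.exp (-(β * x))) := by
    rw [← integral_const_mul]
    refine setIntegral_congr_fun measurableSet_Ioi fun x hx => ?_
    simp only [gammaPDF, neg_mul]
    ring
  rw [h1, K_val hs hβ]
  field_simp
  linear_combination (Jr s - Real.log β * Real.Gamma s) * hkey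

lemma Jr_rec {s : ℝ} (hs : 0 < s) : Jr (s + 1) = Real.Gamma s + s * Jr s := by
  have h1 : HasDerivAt (fun x : ℝ => Real.Gamma (x + 1)) (Jr (s + 1)) s := by
    have := (hasDerivAt_Gamma_Jr (by positivity : (0:ℝ) < s + 1)).comp s
      ((hasDerivAt_id s).add_const 1)
    simpa [Function.comp_def] using this
  have h2 : HasDerivAt (fun x : ℝ => x * Real.Gamma x)
      (1 * Real.Gamma s + s * Jr s) s :=
    (hasDerivAt_id s).mul (hasDerivAt_Gamma_Jr hs)
  have hev : (fun x : ℝ => Real.Gamma (x + 1)) =ᶠ[𝓝 s] fun x => x * Real.Gamma x := by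
    filter_upwards [isOpen_Ioi.mem_nhds hs] with x hx
    exact Real.Gamma_add_one (ne_of_gt (mem_Ioi.mp hx))
  have h3 := h2.congr_of_eventuallyEq hev
  have := h1.unique h3
  linarith

set_option maxHeartbeats 1000000 in
theorem bgamma_score_zero_mean (α β δ : ℝ) (hα : 0 < α) (hβ : 0 < β) (hδ : 0 < δ)
    (hδ2 : δ < 2 * β) :
    ∫ x in Ioi (0:ℝ), Real.log x * bgammaPDF α β δ x =
      (δ / β) * ((1 + 2 * α) * δ / β - 2) / Zc α β δ - Real.log β
        + deriv (fun s => Real.log (Real.Gamma s)) α := by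
  have hG : (0:ℝ) < Real.Gamma α := Real.Gamma_pos_of_pos hα
  have hG1 : Real.Gamma (α + 1) = α * Real.Gamma α := Real.Gamma_add_one hα.ne'
  have hG2 : Real.Gamma (α + 2) = (α + 1) * (α * Real.Gamma α) := by
    rw [show α + 2 = (α + 1) + 1 by ring, Real.Gamma_add_one (by positivity), hG1]
  have hZ : 0 < Zc α β δ := by
    have h1 : Zc α β δ * β ^ 2 * (1 + α)
        = α * ((1 + α) * δ - β) ^ 2 + (α + 2) * β ^ 2 := by
      simp only [Zc]; field_simp; ring
    nlinarith [h1, mul_nonneg hα.le (sq_nonneg ((1 + α) * δ - β)),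
      mul_pos (by positivity : (0:ℝ) < α + 2) (by positivity : (0:ℝ) < β ^ 2),
      (by positivity : (0:ℝ) < β ^ 2 * (1 + α))]
  -- ψ = Jr α / Γ α
  have hψ : deriv (fun s => Real.log (Real.Gamma s)) α = Jr α / Real.Gamma α :=
    ((hasDerivAt_Gamma_Jr hα).log hG.ne').deriv
  -- pointwise decomposition
  have hpt : ∀ x ∈ Ioi (0:ℝ), Real.log x * bgammaPDF α β δ x =
      (2 / Zc α β δ) * (Real.log x * gammaPDF α β x)
        - (2 * δ * α / (β * Zc α β δ)) * (Real.log x * gammaPDF (α + 1) β x)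
        + (δ ^ 2 * (α * (α + 1)) / (β ^ 2 * Zc α β δ)) * (Real.log x * gammaPDF (α + 2) β x) := by
    intro x hx
    have hx0 : (0:ℝ) < x := hx
    have e1 : x ^ (α + 1 - 1) = x ^ (α - 1) * x := by
      rw [show α + 1 - 1 = (α - 1) + 1 by ring, Real.rpow_add hx0, Real.rpow_one]
    have e2 : x ^ (α + 2 - 1) = x ^ (α - 1) * x ^ 2 := by
      rw [show α + 2 - 1 = (α - 1) + 2 by ring, Real.rpow_add hx0]
      norm_num [Real.rpow_two]
    have b1 : β ^ (α + 1) = β ^ α * β := by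
      rw [Real.rpow_add hβ, Real.rpow_one]
    have b2 : β ^ (α + 2) = β ^ α * β ^ 2 := by
      rw [Real.rpow_add hβ]
      norm_num [Real.rpow_two]
    simp only [bgammaPDF, gammaPDF, hG1, hG2, e1, e2, b1, b2]
    field_simp
    ring
  rw [setIntegral_congr_fun measurableSet_Ioi hpt]
  have i1 := (I_int hα hβ).const_mul (2 / Zc α β δ)
  have i2 := (I_int (by positivity : (0:ℝ) < α + 1) hβ).const_mul (2 * δ * α / (β * Zc α β δ))
  have i3 := (I_int (by positivity : (0:ℝ) < α + 2) hβ).const_mul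
    (δ ^ 2 * (α * (α + 1)) / (β ^ 2 * Zc α β δ))
  have i12 : Integrable (fun x => 2 / Zc α β δ * (Real.log x * gammaPDF α β x)
      - 2 * δ * α / (β * Zc α β δ) * (Real.log x * gammaPDF (α + 1) β x))
      (volume.restrict (Ioi 0)) := i1.sub i2
  rw [integral_add i12 i3, integral_sub i1 i2,
    integral_const_mul, integral_const_mul, integral_const_mul,
    I_val hα hβ, I_val (by positivity) hβ, I_val (by positivity) hβ, hψ]
  -- Jr recurrences
  have r1 : Jr (α + 1) = Real.Gamma α + α * Jr α := Jr_rec hα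
  have r2 : Jr (α + 2) = Real.Gamma (α + 1) + (α + 1) * Jr (α + 1) := by
    have := Jr_rec (by positivity : (0:ℝ) < α + 1)
    rw [show α + 1 + 1 = α + 2 by ring] at this
    exact this
  have hα1 : (0:ℝ) < α + 1 := by positivity
  have hGα1 : (0:ℝ) < Real.Gamma (α + 1) := Real.Gamma_pos_of_pos hα1
  have q1 : Jr (α + 1) / Real.Gamma (α + 1) = Jr α / Real.Gamma α + 1 / α := by
    rw [r1, hG1]; field_simp; ring
  have q2 : Jr (α + 2) / Real.Gamma (α + 2) = Jr α / Real.Gamma α + 1 / α + 1 / (α + 1) := by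
    rw [r2, r1, hG2, hG1]; field_simp; ring
  rw [q1, q2]
  have e : Zc α β δ * β ^ 2 = 2 * β ^ 2 + α * δ * ((1 + α) * δ - 2 * β) := by
    rw [Zc]; field_simp
  have hN : (0:ℝ) < 2 * β ^ 2 + α * δ * ((1 + α) * δ - 2 * β) := by
    rw [← e]; positivity
  have hZval : Zc α β δ = (2 * β ^ 2 + α * δ * ((1 + α) * δ - 2 * β)) / β ^ 2 := by
    rw [← e]; field_simp
  rw [hZval]
  generalize Jr α / Real.Gamma α = J
  have hn : 2 * β ^ 2 + α * δ * (δ * (1 + α) - 2 * β) ≠ 0 := by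
    rw [mul_comm δ (1 + α)]; exact hN.ne'
  field_simp
  ring
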